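/- Let A₁, A₂, T₁, T₂ be invertible 2×2 complex matrices satisfying A₁A₂A₁ = A₂A₁A₂, A₁T₁ = T₁A₁, A₂T₂ = T₂A₂, A₁A₂T₁ = T₂A₁A₂, and A₂A₁T₂ = T₁A₂A₁, and suppose the only subspaces of ℂ² invariant under all four matrices are 0 and ℂ². Then there exist an invertible 2×2 complex matrix P and scalars λ₁, λ₂, a₁, b₁ ∈ ℂ with λ₁ ≠ 0, λ₂ ≠ 0, λ₁² + λ₂² − λ₁λ₂ ≠ 0, a₁ ≠ 0, a₁ − b₁(λ₁ − λ₂)/λ₁ ≠ 0, such that P⁻¹A₁P = [[λ₁, λ₁],[0, λ₂]], P⁻¹A₂P = [[λ₂, 0],[−λ₂, λ₁]], P⁻¹T₁P = [[a₁, b₁],[0, a₁ − b₁(λ₁ − λ₂)/λ₁]], and P⁻¹T₂P = [[a₁ − b₁(λ₁ − λ₂)/λ₁, 0],[−b₁λ₂/λ₁, a₁]]. -/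

import Mathlib

open Matrix

namespace SB3Cor46

lemma mv_comp (B : Matrix (Fin 2) (Fin 2) ℂ) (v : Fin 2 → ℂ) (i : Fin 2) :
    B.mulVec v i = B i 0 * v 0 + B i 1 * v 1 := by
  simp [Matrix.mulVec, dotProduct, Fin.sum_univ_two]

lemma vec_ne_zero {v : Fin 2 → ℂ} (hv : v ≠ 0) : v 0 ≠ 0 ∨ v 1 ≠ 0 := by
  by_contra h
  push_neg at h
  exact hv (funext fun i => by fin_cases i <;> simp [h.1, h.2])

lemma ker_le {B : Matrix (Fin 2) (Fin 2) ℂ} (hB : B ≠ 0) {v w : Fin 2 → ℂ}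
    (hv : v ≠ 0) (hBv : B.mulVec v = 0) (hBw : B.mulVec w = 0) : ∃ c : ℂ, w = c • v := by
  have hv0 := congrFun hBv 0; have hv1 := congrFun hBv 1
  have hw0 := congrFun hBw 0; have hw1 := congrFun hBw 1
  rw [mv_comp] at hv0 hv1 hw0 hw1
  simp only [Pi.zero_apply] at hv0 hv1 hw0 hw1
  have hD : v 0 * w 1 - w 0 * v 1 = 0 := by
    obtain ⟨i, j, hij⟩ : ∃ i j, B i j ≠ 0 := by
      by_contra h; push_neg at h
      exact hB (by ext i j; simpa using h i j)
    fin_cases i <;> fin_cases j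
    · have h : B 0 0 * (v 0 * w 1 - w 0 * v 1) = 0 := by
        linear_combination w 1 * hv0 - v 1 * hw0
      exact (mul_eq_zero.1 h).resolve_left hij
    · have h : B 0 1 * (v 0 * w 1 - w 0 * v 1) = 0 := by
        linear_combination v 0 * hw0 - w 0 * hv0
      exact (mul_eq_zero.1 h).resolve_left hij
    · have h : B 1 0 * (v 0 * w 1 - w 0 * v 1) = 0 := by
        linear_combination w 1 * hv1 - v 1 * hw1
      exact (mul_eq_zero.1 h).resolve_left hij
    · have h : B 1 1 * (v 0 * w 1 - w 0 * v 1) = 0 := by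
        linear_combination v 0 * hw1 - w 0 * hv1
      exact (mul_eq_zero.1 h).resolve_left hij
  rcases vec_ne_zero hv with h | h
  · refine ⟨w 0 / v 0, funext fun i => ?_⟩
    fin_cases i
    · simp only [Pi.smul_apply, smul_eq_mul, Fin.zero_eta, Fin.mk_one]; field_simp
    · simp only [Pi.smul_apply, smul_eq_mul, Fin.zero_eta, Fin.mk_one]; field_simp; linear_combination hD
  · refine ⟨w 1 / v 1, funext fun i => ?_⟩
    fin_cases i
    · simp only [Pi.smul_apply, smul_eq_mul, Fin.zero_eta, Fin.mk_one]; field_simp; linear_combination -hD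
    · simp only [Pi.smul_apply, smul_eq_mul, Fin.zero_eta, Fin.mk_one]; field_simp

lemma det0 {B : Matrix (Fin 2) (Fin 2) ℂ} {v : Fin 2 → ℂ} (hv : v ≠ 0)
    (hBv : B.mulVec v = 0) : B 0 0 * B 1 1 - B 0 1 * B 1 0 = 0 := by
  have h0 := congrFun hBv 0; have h1 := congrFun hBv 1
  rw [mv_comp] at h0 h1; simp only [Pi.zero_apply] at h0 h1
  rcases vec_ne_zero hv with h | h
  · have hh : (B 0 0 * B 1 1 - B 0 1 * B 1 0) * v 0 = 0 := by
      linear_combination B 1 1 * h0 - B 0 1 * h1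
    exact (mul_eq_zero.1 hh).resolve_right h
  · have hh : (B 0 0 * B 1 1 - B 0 1 * B 1 0) * v 1 = 0 := by
      linear_combination B 0 0 * h1 - B 1 0 * h0
    exact (mul_eq_zero.1 hh).resolve_right h

lemma quad {A : Matrix (Fin 2) (Fin 2) ℂ} {l1 l2 : ℂ}
    (h1 : l1 + l2 = A 0 0 + A 1 1)
    (h2 : l1 * l2 = A 0 0 * A 1 1 - A 0 1 * A 1 0) :
    (A - l1 • 1) * (A - l2 • 1) = 0 := by
  ext i j
  fin_cases i <;> fin_cases j <;>
    simp only [Matrix.mul_apply, Fin.sum_univ_two, Matrix.sub_apply, Matrix.smul_apply,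
      Matrix.one_apply_eq, Matrix.one_apply_ne, Matrix.zero_apply, smul_eq_mul,
      Fin.zero_eta, Fin.mk_one, ne_eq, Fin.zero_ne_one, not_false_eq_true, 
      Matrix.one_apply, if_true, if_false, mul_one, mul_zero, sub_zero, one_ne_zero]
  · linear_combination (-(A 0 0)) * h1 + h2
  · linear_combination (-(A 0 1)) * h1
  · linear_combination (-(A 1 0)) * h1
  · linear_combination (-(A 1 1)) * h1 + h2

lemma exists_eigen (A : Matrix (Fin 2) (Fin 2) ℂ) :
    ∃ (c : ℂ) (v : Fin 2 → ℂ), v ≠ 0 ∧ A.mulVec v = c • v := by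
  obtain ⟨c, hc⟩ := Module.End.exists_eigenvalue (Matrix.mulVecLin A : Module.End ℂ (Fin 2 → ℂ))
  obtain ⟨v, hv⟩ := hc.exists_hasEigenvector
  exact ⟨c, v, hv.right, hv.apply_eq_smul⟩

lemma indep {e f : Fin 2 → ℂ} (hD : e 0 * f 1 - f 0 * e 1 ≠ 0) {a b : ℂ}
    (h : a • e + b • f = 0) : a = 0 ∧ b = 0 := by
  have h0 := congrFun h 0; have h1 := congrFun h 1
  simp only [Pi.add_apply, Pi.smul_apply, smul_eq_mul, Pi.zero_apply] at h0 h1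
  constructor
  · have hh : a * (e 0 * f 1 - f 0 * e 1) = 0 := by linear_combination f 1 * h0 - f 0 * h1
    exact (mul_eq_zero.1 hh).resolve_right hD
  · have hh : b * (e 0 * f 1 - f 0 * e 1) = 0 := by linear_combination e 0 * h1 - e 1 * h0
    exact (mul_eq_zero.1 hh).resolve_right hD

lemma indep_eq {e f : Fin 2 → ℂ} (hD : e 0 * f 1 - f 0 * e 1 ≠ 0) {a b a' b' : ℂ}
    (h : a • e + b • f = a' • e + b' • f) : a = a' ∧ b = b' := by
  have h' : (a - a') • e + (b - b') • f = 0 := by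
    rw [sub_smul, sub_smul, sub_add_sub_comm, h, sub_self]
  obtain ⟨u1, u2⟩ := indep hD h'
  exact ⟨sub_eq_zero.1 u1, sub_eq_zero.1 u2⟩

lemma dep {e f : Fin 2 → ℂ} (he : e ≠ 0) (hD : e 0 * f 1 - f 0 * e 1 = 0) :
    ∃ c : ℂ, f = c • e := by
  rcases vec_ne_zero he with h | h
  · refine ⟨f 0 / e 0, funext fun i => ?_⟩
    fin_cases i
    · simp only [Pi.smul_apply, smul_eq_mul, Fin.zero_eta, Fin.mk_one]; field_simp
    · simp only [Pi.smul_apply, smul_eq_mul, Fin.zero_eta, Fin.mk_one]; field_simp; linear_combination hD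
  · refine ⟨f 1 / e 1, funext fun i => ?_⟩
    fin_cases i
    · simp only [Pi.smul_apply, smul_eq_mul, Fin.zero_eta, Fin.mk_one]; field_simp; linear_combination -hD
    · simp only [Pi.smul_apply, smul_eq_mul, Fin.zero_eta, Fin.mk_one]; field_simp

lemma expand {e f : Fin 2 → ℂ} (hD : e 0 * f 1 - f 0 * e 1 ≠ 0) (w : Fin 2 → ℂ) :
    w = ((w 0 * f 1 - w 1 * f 0) / (e 0 * f 1 - f 0 * e 1)) • e
      + ((e 0 * w 1 - e 1 * w 0) / (e 0 * f 1 - f 0 * e 1)) • f := by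
  funext i
  fin_cases i <;>
    · simp only [Pi.add_apply, Pi.smul_apply, smul_eq_mul, Fin.zero_eta, Fin.mk_one]
      rw [div_mul_eq_mul_div, div_mul_eq_mul_div, ← add_div, eq_div_iff hD]
      ring

lemma mv_inj {M : Matrix (Fin 2) (Fin 2) ℂ} (hM : IsUnit M) {v w : Fin 2 → ℂ}
    (h : M.mulVec v = M.mulVec w) : v = w := by
  have h1 : (↑hM.unit⁻¹ : Matrix (Fin 2) (Fin 2) ℂ) * M = 1 := by
    conv_rhs => rw [← hM.unit.inv_mul]
    rw [hM.unit_spec]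
  calc v = (1 : Matrix (Fin 2) (Fin 2) ℂ).mulVec v := by rw [Matrix.one_mulVec]
    _ = (↑hM.unit⁻¹ : Matrix (Fin 2) (Fin 2) ℂ).mulVec (M.mulVec v) := by
        rw [Matrix.mulVec_mulVec, h1]
    _ = (↑hM.unit⁻¹ : Matrix (Fin 2) (Fin 2) ℂ).mulVec (M.mulVec w) := by rw [h]
    _ = w := by rw [Matrix.mulVec_mulVec, h1, Matrix.one_mulVec]

lemma span_ne_top {w : Fin 2 → ℂ} (hw : w ≠ 0) : Submodule.span ℂ {w} ≠ ⊤ := by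
  intro h
  have h1 : Module.finrank ℂ (Submodule.span ℂ {w}) = 1 := finrank_span_singleton hw
  rw [h] at h1
  rw [finrank_top] at h1
  simp at h1

lemma line_inv {A1 A2 T1 T2 : Matrix (Fin 2) (Fin 2) ℂ}
    (hirr : ∀ V : Submodule ℂ (Fin 2 → ℂ),
        ((∀ v ∈ V, A1.mulVec v ∈ V) ∧ (∀ v ∈ V, A2.mulVec v ∈ V) ∧
         (∀ v ∈ V, T1.mulVec v ∈ V) ∧ (∀ v ∈ V, T2.mulVec v ∈ V)) →
        V = ⊥ ∨ V = ⊤)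
    {w : Fin 2 → ℂ} (hw : w ≠ 0)
    (h1 : ∃ c : ℂ, A1.mulVec w = c • w) (h2 : ∃ c : ℂ, A2.mulVec w = c • w)
    (h3 : ∃ c : ℂ, T1.mulVec w = c • w) (h4 : ∃ c : ℂ, T2.mulVec w = c • w) : False := by
  have key : ∀ (M : Matrix (Fin 2) (Fin 2) ℂ), (∃ c : ℂ, M.mulVec w = c • w) →
      ∀ v ∈ Submodule.span ℂ {w}, M.mulVec v ∈ Submodule.span ℂ {w} := by
    rintro M ⟨c, hc⟩ v hv
    rw [Submodule.mem_span_singleton] at hv ⊢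
    obtain ⟨d, rfl⟩ := hv
    exact ⟨d * c, by rw [Matrix.mulVec_smul, hc, smul_smul]⟩
  rcases hirr (Submodule.span ℂ {w}) ⟨key A1 h1, key A2 h2, key T1 h3, key T2 h4⟩ with h | h
  · have hm : w ∈ Submodule.span ℂ {w} := Submodule.mem_span_singleton_self w
    rw [h] at hm
    exact hw ((Submodule.mem_bot ℂ).1 hm)
  · exact span_ne_top hw h

end SB3Cor46
/-- Corollary 4.6: every irreducible representation `SB₃ → GL₂(ℂ)` is equivalent to one of
the representations obtained in Theorem 4.3. -/
theorem SB3_dim2_irreducible_classification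
    (A1 A2 T1 T2 : Matrix (Fin 2) (Fin 2) ℂ)
    (hA1 : IsUnit A1) (hA2 : IsUnit A2) (hT1 : IsUnit T1) (hT2 : IsUnit T2)
    (rbraid : A1 * A2 * A1 = A2 * A1 * A2)
    (r1 : A1 * T1 = T1 * A1) (r2 : A2 * T2 = T2 * A2)
    (r3 : A1 * A2 * T1 = T2 * (A1 * A2)) (r4 : A2 * A1 * T2 = T1 * (A2 * A1))
    (hirr : ∀ V : Submodule ℂ (Fin 2 → ℂ),
        ((∀ v ∈ V, A1.mulVec v ∈ V) ∧ (∀ v ∈ V, A2.mulVec v ∈ V) ∧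
         (∀ v ∈ V, T1.mulVec v ∈ V) ∧ (∀ v ∈ V, T2.mulVec v ∈ V)) →
        V = ⊥ ∨ V = ⊤) :
    ∃ (P : Matrix (Fin 2) (Fin 2) ℂ) (l1 l2 a1 b1 : ℂ), IsUnit P ∧
      l1 ≠ 0 ∧ l2 ≠ 0 ∧ l1 ^ 2 + l2 ^ 2 - l1 * l2 ≠ 0 ∧
      a1 ≠ 0 ∧ a1 - b1 * (l1 - l2) / l1 ≠ 0 ∧
      P⁻¹ * A1 * P = !![l1, l1; 0, l2] ∧
      P⁻¹ * A2 * P = !![l2, 0; -l2, l1] ∧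
      P⁻¹ * T1 * P = !![a1, b1; 0, a1 - b1 * (l1 - l2) / l1] ∧
      P⁻¹ * T2 * P = !![a1 - b1 * (l1 - l2) / l1, 0; -(b1 * l2 / l1), a1] := by
  classical
  -- determinant of A1 is nonzero
  have hdet1 : A1 0 0 * A1 1 1 - A1 0 1 * A1 1 0 ≠ 0 := by
    have h := (Matrix.isUnit_iff_isUnit_det A1).1 hA1
    rw [Matrix.det_fin_two] at h
    exact h.ne_zero
  -- eigenvalue and eigenvector of A1
  obtain ⟨l1, v, hv0, hv⟩ := SB3Cor46.exists_eigen A1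
  have hl1 : l1 ≠ 0 := by
    intro h
    rw [h, zero_smul] at hv
    exact hv0 (SB3Cor46.mv_inj hA1 (by rw [hv, Matrix.mulVec_zero]))
  have hker : (A1 - l1 • 1).mulVec v = 0 := by
    rw [Matrix.sub_mulVec, Matrix.smul_mulVec, Matrix.one_mulVec, hv, sub_self]
  have hchar := SB3Cor46.det0 hv0 hker
  rw [show (A1 - l1 • 1) 0 0 = A1 0 0 - l1 by norm_num [Matrix.one_apply],
    show (A1 - l1 • 1) 1 1 = A1 1 1 - l1 by norm_num [Matrix.one_apply],
    show (A1 - l1 • 1) 0 1 = A1 0 1 by norm_num [Matrix.one_apply],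
    show (A1 - l1 • 1) 1 0 = A1 1 0 by norm_num [Matrix.one_apply]] at hchar
  have hl1l2 : l1 * (A1 0 0 + A1 1 1 - l1) = A1 0 0 * A1 1 1 - A1 0 1 * A1 1 0 := by
    linear_combination -hchar
  obtain ⟨l2, hl2def⟩ : ∃ l2 : ℂ, l2 = A1 0 0 + A1 1 1 - l1 := ⟨_, rfl⟩
  rw [← hl2def] at hl1l2
  have hl2 : l2 ≠ 0 := fun h => hdet1 (by rw [← hl1l2, h, mul_zero])
  have hsum : l1 + l2 = A1 0 0 + A1 1 1 := by rw [hl2def]; ring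
  have hquad12 : (A1 - l1 • 1) * (A1 - l2 • 1) = 0 := SB3Cor46.quad hsum hl1l2
  -- A1 is not scalar
  have hnsc1 : ∀ c : ℂ, A1 ≠ c • (1 : Matrix (Fin 2) (Fin 2) ℂ) := by
    intro c hc
    have hc0 : c ≠ 0 := by
      intro h0
      have h := (Matrix.isUnit_iff_isUnit_det A1).1 hA1
      rw [hc, h0, zero_smul] at h
      simp at h
    -- A2 is the same scalar
    obtain ⟨B2, hB2⟩ : ∃ B2 : Matrix (Fin 2) (Fin 2) ℂ, A2 * B2 = 1 :=
      ⟨A2⁻¹, Matrix.mul_nonsing_inv A2 ((Matrix.isUnit_iff_isUnit_det A2).1 hA2)⟩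
    have hbr := rbraid
    rw [hc] at hbr
    have hL : (c • (1 : Matrix (Fin 2) (Fin 2) ℂ)) * A2 * (c • 1) = c • (c • A2) := by
      simp [smul_mul_assoc, mul_smul_comm]
    have hR : A2 * (c • (1 : Matrix (Fin 2) (Fin 2) ℂ)) * A2 = c • (A2 * A2) := by
      simp [smul_mul_assoc, mul_smul_comm]
    rw [hL, hR] at hbr
    have h2 : c • A2 = A2 * A2 := smul_right_injective (Matrix (Fin 2) (Fin 2) ℂ) hc0 hbr
    have hA2c : A2 = c • (1 : Matrix (Fin 2) (Fin 2) ℂ) := by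
      calc A2 = (A2 * A2) * B2 := by rw [mul_assoc, hB2, mul_one]
        _ = (c • A2) * B2 := by rw [h2]
        _ = c • (A2 * B2) := by rw [smul_mul_assoc]
        _ = c • 1 := by rw [hB2]
    have h3 := r3
    rw [hc, hA2c] at h3
    have hL2 : (c • (1 : Matrix (Fin 2) (Fin 2) ℂ)) * (c • 1) * T1 = (c * c) • T1 := by
      simp [smul_mul_assoc, mul_smul_comm, smul_smul]
    have hR2 : T2 * ((c • (1 : Matrix (Fin 2) (Fin 2) ℂ)) * (c • 1)) = (c * c) • T2 := by
      simp [smul_mul_assoc, mul_smul_comm, smul_smul]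
    rw [hL2, hR2] at h3
    have hT12 : T1 = T2 :=
      smul_right_injective (Matrix (Fin 2) (Fin 2) ℂ) (mul_ne_zero hc0 hc0) h3
    obtain ⟨mu, w, hw0, hww⟩ := SB3Cor46.exists_eigen T1
    refine SB3Cor46.line_inv hirr hw0 ⟨c, ?_⟩ ⟨c, ?_⟩ ⟨mu, hww⟩ ⟨mu, ?_⟩
    · rw [hc, Matrix.smul_mulVec, Matrix.one_mulVec]
    · rw [hA2c, Matrix.smul_mulVec, Matrix.one_mulVec]
    · rw [← hT12]; exact hww
  -- A2 is not scalar
  have hnsc2 : ∀ c : ℂ, A2 ≠ c • (1 : Matrix (Fin 2) (Fin 2) ℂ) := by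
    intro c hc
    have hc0 : c ≠ 0 := by
      intro h0
      have h := (Matrix.isUnit_iff_isUnit_det A2).1 hA2
      rw [hc, h0, zero_smul] at h
      simp at h
    obtain ⟨B1, hB1⟩ : ∃ B1 : Matrix (Fin 2) (Fin 2) ℂ, A1 * B1 = 1 :=
      ⟨A1⁻¹, Matrix.mul_nonsing_inv A1 ((Matrix.isUnit_iff_isUnit_det A1).1 hA1)⟩
    have hbr := rbraid
    rw [hc] at hbr
    have hL : A1 * (c • (1 : Matrix (Fin 2) (Fin 2) ℂ)) * A1 = c • (A1 * A1) := by
      simp [smul_mul_assoc, mul_smul_comm]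
    have hR : (c • (1 : Matrix (Fin 2) (Fin 2) ℂ)) * A1 * (c • 1) = c • (c • A1) := by
      simp [smul_mul_assoc, mul_smul_comm]
    rw [hL, hR] at hbr
    have h2 : A1 * A1 = c • A1 := smul_right_injective (Matrix (Fin 2) (Fin 2) ℂ) hc0 hbr
    have hA1c : A1 = c • (1 : Matrix (Fin 2) (Fin 2) ℂ) := by
      calc A1 = (A1 * A1) * B1 := by rw [mul_assoc, hB1, mul_one]
        _ = (c • A1) * B1 := by rw [h2]
        _ = c • (A1 * B1) := by rw [smul_mul_assoc]
        _ = c • 1 := by rw [hB1]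
    exact hnsc1 c hA1c
  -- common eigenvector yields a contradiction
  have hcommon : ∀ (w : Fin 2 → ℂ) (m1 m2 : ℂ), w ≠ 0 → A1.mulVec w = m1 • w →
      A2.mulVec w = m2 • w → False := by
    intro w m1 m2 hw0 h1 h2
    have hB1 : A1 - m1 • 1 ≠ 0 := fun h => hnsc1 m1 (sub_eq_zero.1 h)
    have hB2 : A2 - m2 • 1 ≠ 0 := fun h => hnsc2 m2 (sub_eq_zero.1 h)
    have hker1 : (A1 - m1 • 1).mulVec w = 0 := by
      rw [Matrix.sub_mulVec, Matrix.smul_mulVec, Matrix.one_mulVec, h1, sub_self]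
    have hker2 : (A2 - m2 • 1).mulVec w = 0 := by
      rw [Matrix.sub_mulVec, Matrix.smul_mulVec, Matrix.one_mulVec, h2, sub_self]
    have ht1 : (A1 - m1 • 1).mulVec (T1.mulVec w) = 0 := by
      have hh : A1.mulVec (T1.mulVec w) = m1 • T1.mulVec w := by
        rw [Matrix.mulVec_mulVec, r1, ← Matrix.mulVec_mulVec, h1, Matrix.mulVec_smul]
      rw [Matrix.sub_mulVec, Matrix.smul_mulVec, Matrix.one_mulVec, hh, sub_self]
    have ht2 : (A2 - m2 • 1).mulVec (T2.mulVec w) = 0 := by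
      have hh : A2.mulVec (T2.mulVec w) = m2 • T2.mulVec w := by
        rw [Matrix.mulVec_mulVec, r2, ← Matrix.mulVec_mulVec, h2, Matrix.mulVec_smul]
      rw [Matrix.sub_mulVec, Matrix.smul_mulVec, Matrix.one_mulVec, hh, sub_self]
    obtain ⟨c3, hc3⟩ := SB3Cor46.ker_le hB1 hw0 hker1 ht1
    obtain ⟨c4, hc4⟩ := SB3Cor46.ker_le hB2 hw0 hker2 ht2
    exact SB3Cor46.line_inv hirr hw0 ⟨m1, h1⟩ ⟨m2, h2⟩ ⟨c3, hc3⟩ ⟨c4, hc4⟩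
  -- construction of the basis vector f
  have hDeltaA : A2 * (A1 * A2 * A1) = (A1 * A2 * A1) * A1 := by
    calc A2 * (A1 * A2 * A1) = (A2 * A1 * A2) * A1 := by rw [← mul_assoc, ← mul_assoc]
      _ = (A1 * A2 * A1) * A1 := by rw [← rbraid]
  have hDu : IsUnit (A1 * A2 * A1) := (hA1.mul hA2).mul hA1
  obtain ⟨f, hfdef⟩ : ∃ f, f = (A1 * A2 * A1).mulVec v := ⟨_, rfl⟩
  have hf0 : f ≠ 0 := by
    intro h
    exact hv0 (SB3Cor46.mv_inj hDu (by rw [← hfdef, h, Matrix.mulVec_zero]))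
  have hA2f : A2.mulVec f = l1 • f := by
    rw [hfdef, Matrix.mulVec_mulVec, hDeltaA, ← Matrix.mulVec_mulVec, hv, Matrix.mulVec_smul]
  -- construction of e
  obtain ⟨e', he'def⟩ : ∃ e', e' = A1.mulVec f - l2 • f := ⟨_, rfl⟩
  have eigen_e' : A1.mulVec e' = l1 • e' := by
    have h0 : ((A1 - l1 • 1) * (A1 - l2 • 1)).mulVec f = 0 := by
      rw [hquad12, Matrix.zero_mulVec]
    rw [← Matrix.mulVec_mulVec] at h0
    have h1 : (A1 - l2 • 1).mulVec f = e' := by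
      rw [Matrix.sub_mulVec, Matrix.smul_mulVec, Matrix.one_mulVec, he'def]
    rw [h1, Matrix.sub_mulVec, Matrix.smul_mulVec, Matrix.one_mulVec, sub_eq_zero] at h0
    exact h0
  have he'0 : e' ≠ 0 := by
    intro h
    exact hcommon f l2 l1 hf0 (sub_eq_zero.1 (by rw [← he'def]; exact h)) hA2f
  obtain ⟨e, hedef⟩ : ∃ e, e = l1⁻¹ • e' := ⟨_, rfl⟩
  have he0 : e ≠ 0 := by rw [hedef]; exact smul_ne_zero (inv_ne_zero hl1) he'0
  have hA1e : A1.mulVec e = l1 • e := by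
    rw [hedef, Matrix.mulVec_smul, eigen_e', smul_comm]
  have hl1e : l1 • e = e' := by rw [hedef, smul_smul, mul_inv_cancel₀ hl1, one_smul]
  have hA1f : A1.mulVec f = l1 • e + l2 • f := by
    rw [hl1e, he'def, sub_add_cancel]
  -- e and f are linearly independent
  have hD : e 0 * f 1 - f 0 * e 1 ≠ 0 := by
    intro h
    obtain ⟨c, hcc⟩ := SB3Cor46.dep he0 h
    refine hcommon f l1 l1 hf0 ?_ hA2f
    rw [hcc, Matrix.mulVec_smul, hA1e, smul_comm]
  -- normalized relations
  have hA1e2 : A1.mulVec e = l1 • e + (0 : ℂ) • f := by rw [zero_smul, add_zero, hA1e]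
  have hA2f2 : A2.mulVec f = (0 : ℂ) • e + l1 • f := by rw [zero_smul, zero_add, hA2f]
  obtain ⟨g, d, hA2e⟩ : ∃ g d : ℂ, A2.mulVec e = g • e + d • f :=
    ⟨_, _, SB3Cor46.expand hD _⟩
  have hstep : ∀ (M : Matrix (Fin 2) (Fin 2) ℂ) (a b c dd x y : ℂ),
      M.mulVec e = a • e + b • f → M.mulVec f = c • e + dd • f →
      M.mulVec (x • e + y • f) = (a * x + c * y) • e + (b * x + dd * y) • f := by
    intro M a b c dd x y hme hmf
    rw [Matrix.mulVec_add, Matrix.mulVec_smul, Matrix.mulVec_smul, hme, hmf]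
    module
  -- braid relation applied to f : get d = -l2
  have hbf : A1.mulVec (A2.mulVec (A1.mulVec f)) = A2.mulVec (A1.mulVec (A2.mulVec f)) := by
    rw [Matrix.mulVec_mulVec, Matrix.mulVec_mulVec, Matrix.mulVec_mulVec,
      Matrix.mulVec_mulVec, rbraid]
  rw [hA1f, hA2f2, hstep A2 g d 0 l1 l1 l2 hA2e hA2f2,
    hstep A1 l1 0 l1 l2 0 l1 hA1e2 hA1f,
    hstep A1 l1 0 l1 l2 (g * l1 + 0 * l2) (d * l1 + l1 * l2) hA1e2 hA1f,
    hstep A2 g d 0 l1 (l1 * 0 + l1 * l1) (0 * 0 + l2 * l1) hA2e hA2f2] at hbf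
  obtain ⟨eq1, -⟩ := SB3Cor46.indep_eq hD hbf
  have hd : d = -l2 := by
    have h2 : l1 * l1 * (d + l2) = 0 := by linear_combination eq1
    have h3 := (mul_eq_zero.1 h2).resolve_left (mul_ne_zero hl1 hl1)
    linear_combination h3
  -- braid relation applied to e : get g = l2
  have hbe : A1.mulVec (A2.mulVec (A1.mulVec e)) = A2.mulVec (A1.mulVec (A2.mulVec e)) := by
    rw [Matrix.mulVec_mulVec, Matrix.mulVec_mulVec, Matrix.mulVec_mulVec,
      Matrix.mulVec_mulVec, rbraid]
  rw [hA1e2, hA2e, hstep A2 g d 0 l1 l1 0 hA2e hA2f2,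
    hstep A1 l1 0 l1 l2 g d hA1e2 hA1f,
    hstep A1 l1 0 l1 l2 (g * l1 + 0 * 0) (d * l1 + l1 * 0) hA1e2 hA1f,
    hstep A2 g d 0 l1 (l1 * g + l1 * d) (0 * g + l2 * d) hA2e hA2f2] at hbe
  obtain ⟨-, eq4⟩ := SB3Cor46.indep_eq hD hbe
  have hg : g = l2 := by
    rw [hd] at eq4
    have h2 : l1 * l2 * (g - l2) = 0 := by linear_combination eq4
    have h3 := (mul_eq_zero.1 h2).resolve_left (mul_ne_zero hl1 hl2)
    linear_combination h3
  have hA2e2 : A2.mulVec e = l2 • e + (-l2) • f := by rw [hA2e, hg, hd]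
  -- T1 structure
  have hBne : A1 - l1 • 1 ≠ 0 := fun h => hnsc1 l1 (sub_eq_zero.1 h)
  have hkerE : (A1 - l1 • 1).mulVec e = 0 := by
    rw [Matrix.sub_mulVec, Matrix.smul_mulVec, Matrix.one_mulVec, hA1e, sub_self]
  have hT1A : A1.mulVec (T1.mulVec e) = l1 • T1.mulVec e := by
    rw [Matrix.mulVec_mulVec, r1, ← Matrix.mulVec_mulVec, hA1e, Matrix.mulVec_smul]
  obtain ⟨a1, ha1⟩ := SB3Cor46.ker_le hBne he0 hkerE
    (by rw [Matrix.sub_mulVec, Matrix.smul_mulVec, Matrix.one_mulVec, hT1A, sub_self])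
  have ha1ne : a1 ≠ 0 := by
    intro h
    rw [h, zero_smul] at ha1
    exact he0 (SB3Cor46.mv_inj hT1 (by rw [ha1, Matrix.mulVec_zero]))
  obtain ⟨b1, c1, hT1f⟩ : ∃ b c : ℂ, T1.mulVec f = b • e + c • f :=
    ⟨_, _, SB3Cor46.expand hD _⟩
  have hT1e2 : T1.mulVec e = a1 • e + (0 : ℂ) • f := by rw [zero_smul, add_zero, ha1]
  have hr1f : A1.mulVec (T1.mulVec f) = T1.mulVec (A1.mulVec f) := by
    rw [Matrix.mulVec_mulVec, Matrix.mulVec_mulVec, r1]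
  rw [hT1f, hA1f, hstep A1 l1 0 l1 l2 b1 c1 hA1e2 hA1f,
    hstep T1 a1 0 b1 c1 l1 l2 hT1e2 hT1f] at hr1f
  obtain ⟨eqT, -⟩ := SB3Cor46.indep_eq hD hr1f
  have hc1 : c1 = a1 - b1 * (l1 - l2) / l1 := by
    field_simp
    linear_combination eqT
  have hc1ne : c1 ≠ 0 := by
    intro h
    rw [h, zero_smul, add_zero] at hT1f
    have hu : T1.mulVec ((-b1) • e + a1 • f) = 0 := by
      rw [Matrix.mulVec_add, Matrix.mulVec_smul, Matrix.mulVec_smul, hT1f, ha1,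
        smul_smul, smul_smul, ← add_smul, show -b1 * a1 + a1 * b1 = 0 by ring, zero_smul]
    have h2 : (-b1) • e + a1 • f = 0 :=
      SB3Cor46.mv_inj hT1 (by rw [hu, Matrix.mulVec_zero])
    exact ha1ne (SB3Cor46.indep hD h2).2
  -- T2 structure from r3
  have hMe : (A1 * A2).mulVec e = (-(l2 * l2)) • f := by
    rw [← Matrix.mulVec_mulVec, hA2e2, hstep A1 l1 0 l1 l2 l2 (-l2) hA1e2 hA1f]
    module
  have hMf : (A1 * A2).mulVec f = (l1 * l1) • e + (l2 * l1) • f := by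
    rw [← Matrix.mulVec_mulVec, hA2f2, hstep A1 l1 0 l1 l2 0 l1 hA1e2 hA1f]
    module
  have hr3e : (A1 * A2).mulVec (T1.mulVec e) = T2.mulVec ((A1 * A2).mulVec e) := by
    rw [Matrix.mulVec_mulVec, Matrix.mulVec_mulVec, r3]
  rw [ha1, Matrix.mulVec_smul, hMe, Matrix.mulVec_smul] at hr3e
  have hT2f : T2.mulVec f = a1 • f := by
    apply smul_right_injective (Fin 2 → ℂ)
      (show -(l2 * l2) ≠ 0 from neg_ne_zero.2 (mul_ne_zero hl2 hl2))
    show -(l2 * l2) • T2.mulVec f = -(l2 * l2) • (a1 • f)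
    rw [← hr3e]
    module
  have hT2f2 : T2.mulVec f = (0 : ℂ) • e + a1 • f := by rw [zero_smul, zero_add, hT2f]
  have hr3f : (A1 * A2).mulVec (T1.mulVec f) = T2.mulVec ((A1 * A2).mulVec f) := by
    rw [Matrix.mulVec_mulVec, Matrix.mulVec_mulVec, r3]
  rw [hT1f, hMf, Matrix.mulVec_add, Matrix.mulVec_smul, Matrix.mulVec_smul, hMe, hMf,
    Matrix.mulVec_add, Matrix.mulVec_smul, Matrix.mulVec_smul, hT2f] at hr3f
  have hT2e : T2.mulVec e = c1 • e + (-(b1 * l2 / l1)) • f := by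
    apply smul_right_injective (Fin 2 → ℂ) (mul_ne_zero hl1 hl1)
    show (l1 * l1) • T2.mulVec e = (l1 * l1) • (c1 • e + (-(b1 * l2 / l1)) • f)
    have hkey : (l1 * l1) • (c1 • e + (-(b1 * l2 / l1)) • f)
        = b1 • (-(l2 * l2)) • f + c1 • ((l1 * l1) • e + (l2 * l1) • f)
          - (l2 * l1) • a1 • f := by
      match_scalars
      · ring
      · rw [hc1]; field_simp; ring
    rw [hkey]
    exact eq_sub_of_add_eq hr3f.symm
  -- the nondegeneracy condition
  have hcond : l1 ^ 2 + l2 ^ 2 - l1 * l2 ≠ 0 := by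
    intro h0
    obtain ⟨u, hudef⟩ : ∃ u, u = l1 • e + (l2 - l1) • f := ⟨_, rfl⟩
    have hu0 : u ≠ 0 := by
      intro h
      exact hl1 (SB3Cor46.indep hD (by rw [← hudef]; exact h)).1
    refine SB3Cor46.line_inv hirr hu0 ⟨l2, ?_⟩ ⟨l2, ?_⟩ ⟨c1, ?_⟩ ⟨c1, ?_⟩
    · rw [hudef, hstep A1 l1 0 l1 l2 l1 (l2 - l1) hA1e2 hA1f]
      match_scalars <;> ring
    · rw [hudef, hstep A2 l2 (-l2) 0 l1 l1 (l2 - l1) hA2e2 hA2f2]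
      match_scalars
      · ring
      · linear_combination -h0
    · rw [hudef, hstep T1 a1 0 b1 c1 l1 (l2 - l1) hT1e2 hT1f]
      match_scalars
      · rw [hc1]; field_simp; ring
      · ring
    · rw [hudef, hstep T2 c1 (-(b1 * l2 / l1)) 0 a1 l1 (l2 - l1) hT2e hT2f2]
      match_scalars
      · ring
      · rw [hc1]; field_simp; linear_combination (-b1) * h0
  -- assemble the change of basis
  obtain ⟨P, hPdef⟩ : ∃ P, P = !![e 0, f 0; e 1, f 1] := ⟨_, rfl⟩
  have hPdet : IsUnit P.det := by
    rw [Matrix.det_fin_two, hPdef]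
    simpa using isUnit_iff_ne_zero.2 hD
  have hPu : IsUnit P := (Matrix.isUnit_iff_isUnit_det P).2 hPdet
  have cols : ∀ (M : Matrix (Fin 2) (Fin 2) ℂ) (p q r s : ℂ),
      M.mulVec e = p • e + r • f → M.mulVec f = q • e + s • f →
      M * P = P * !![p, q; r, s] := by
    intro M p q r s hcolE hcolF
    have h0 := congrFun hcolE 0
    have h1 := congrFun hcolE 1
    have h2 := congrFun hcolF 0
    have h3 := congrFun hcolF 1
    simp only [SB3Cor46.mv_comp, Pi.add_apply, Pi.smul_apply, smul_eq_mul] at h0 h1 h2 h3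
    ext i j
    fin_cases i <;> fin_cases j <;>
      simp [hPdef, Matrix.mul_apply, Fin.sum_univ_two]
    · linear_combination h0
    · linear_combination h2
    · linear_combination h1
    · linear_combination h3
  have conj : ∀ (M B : Matrix (Fin 2) (Fin 2) ℂ), M * P = P * B → P⁻¹ * M * P = B := by
    intro M B h
    rw [mul_assoc, h, ← mul_assoc, Matrix.nonsing_inv_mul P hPdet, one_mul]
  refine ⟨P, l1, l2, a1, b1, hPu, hl1, hl2, hcond, ha1ne, ?_, ?_, ?_, ?_, ?_⟩
  · rw [← hc1]; exact hc1ne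
  · exact conj A1 _ (cols A1 l1 l1 0 l2 hA1e2 hA1f)
  · exact conj A2 _ (cols A2 l2 0 (-l2) l1 hA2e2 hA2f2)
  · rw [← hc1]; exact conj T1 _ (cols T1 a1 b1 0 c1 hT1e2 hT1f)
  · rw [← hc1]; exact conj T2 _ (cols T2 c1 0 (-(b1 * l2 / l1)) a1 hT2e hT2f2)
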